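/- Let G be a connected bipartite weighted graph on N ≥ 2 vertices with parts V_1 and V_1^c, and let v be any nonzero eigenvector of the combinatorial graph Laplacian L associated with its largest eigenvalue λ_max. Then v(i)·v(j) > 0 whenever i and j both lie in V_1 or both lie in V_1^c, and v(i)·v(j) < 0 whenever one of i, j lies in V_1 and the other in V_1^c. In particular, v has no zero component and the set {i : v(i) ≥ 0} equals V_1 or V_1^c. -/

import Mathlib

open Matrix

noncomputable def deg {n : Type*} [Fintype n] (W : Matrix n n ℝ) (i : n) : ℝ := ∑ j, W i j

noncomputable def lap {n : Type*} [Fintype n] [DecidableEq n] (W : Matrix n n ℝ) :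
    Matrix n n ℝ :=
  Matrix.diagonal (deg W) - W

def IsConn {n : Type*} (W : Matrix n n ℝ) : Prop :=
  ∀ i j : n, Relation.ReflTransGen (fun a b => 0 < W a b) i j

def IsBipartiteWith {n : Type*} (W : Matrix n n ℝ) (V1 : Set n) : Prop :=
  ∀ i j, 0 < W i j → (i ∈ V1 ↔ j ∉ V1)

open Classical in
noncomputable def sortedEigs {n : Type*} [Fintype n] [DecidableEq n] (A : Matrix n n ℝ) :
    Fin (Fintype.card n) → ℝ :=
  if h : A.IsHermitian then
    (fun i => h.eigenvalues ((Fintype.equivFin n).symm i)) ∘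
      ⇑(Tuple.sort fun i => h.eigenvalues ((Fintype.equivFin n).symm i))
  else 0

noncomputable def kron {n : Type*} [Fintype n] [DecidableEq n] (L : Matrix n n ℝ)
    (V1 : Finset n) : Matrix ↥V1 ↥V1 ℝ :=
  L.submatrix (Subtype.val : ↥V1 → n) (Subtype.val : ↥V1 → n) -
    L.submatrix (Subtype.val : ↥V1 → n) (Subtype.val : ↥(V1ᶜ) → n) *
      (L.submatrix (Subtype.val : ↥(V1ᶜ) → n) (Subtype.val : ↥(V1ᶜ) → n))⁻¹ *
      L.submatrix (Subtype.val : ↥(V1ᶜ) → n) (Subtype.val : ↥V1 → n)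

noncomputable def wred {m : Type*} [DecidableEq m] (K : Matrix m m ℝ) : Matrix m m ℝ :=
  Matrix.of fun i j => if i = j then 0 else -K i j

lemma lap_herm {n : Type*} [Fintype n] [DecidableEq n] {W : Matrix n n ℝ} (hsymm : W.IsSymm) :
    (lap W).IsHermitian := by
  unfold Matrix.IsHermitian lap
  ext i j
  simp [Matrix.conjTranspose_apply, Matrix.diagonal_apply, Matrix.sub_apply]
  by_cases h : i = j
  · simp [h]
  · simp [h, Ne.symm h]
    exact hsymm.apply j i |>.symm ▸ rfl

lemma lap_mulVec {n : Type*} [Fintype n] [DecidableEq n] (W : Matrix n n ℝ) (x : n → ℝ) (i : n) :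
    (lap W *ᵥ x) i = deg W i * x i - ∑ j, W i j * x j := by
  rw [show lap W *ᵥ x = diagonal (deg W) *ᵥ x - W *ᵥ x from sub_mulVec _ _ _]
  simp [mulVec, dotProduct, diagonal_apply, ite_mul]

lemma quad_form {n : Type*} [Fintype n] [DecidableEq n] {W : Matrix n n ℝ} (hsymm : W.IsSymm)
    (x : n → ℝ) :
    2 * (x ⬝ᵥ (lap W *ᵥ x)) = ∑ i, ∑ j, W i j * (x i - x j)^2 := by
  have hswap : ∑ i, ∑ j, W i j * x j ^ 2 = ∑ i, ∑ j, W i j * x i ^ 2 := by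
    rw [Finset.sum_comm]
    refine Finset.sum_congr rfl fun i _ => Finset.sum_congr rfl fun j _ => ?_
    rw [show W j i = W i j from (hsymm.apply i j)]
  have e1 : x ⬝ᵥ (lap W *ᵥ x)
      = (∑ i, ∑ j, W i j * x i ^ 2) - ∑ i, ∑ j, W i j * (x i * x j) := by
    simp only [dotProduct, lap_mulVec, deg, mul_sub]
    rw [← Finset.sum_sub_distrib]
    refine Finset.sum_congr rfl fun i _ => ?_
    rw [Finset.sum_mul, Finset.mul_sum, Finset.mul_sum]
    congr 1 <;> exact Finset.sum_congr rfl fun j _ => by ring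
  have e2 : ∑ i, ∑ j, W i j * (x i - x j)^2
      = (∑ i, ∑ j, W i j * x i ^ 2) - 2 * (∑ i, ∑ j, W i j * (x i * x j))
        + ∑ i, ∑ j, W i j * x j ^ 2 := by
    rw [Finset.mul_sum, ← Finset.sum_sub_distrib, ← Finset.sum_add_distrib]
    refine Finset.sum_congr rfl fun i _ => ?_
    rw [Finset.mul_sum, ← Finset.sum_sub_distrib, ← Finset.sum_add_distrib]
    refine Finset.sum_congr rfl fun j _ => by ring
  rw [e1, e2, hswap]; ring

lemma psd_shift {n : Type*} [Fintype n] [DecidableEq n] {A : Matrix n n ℝ}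
    (hA : A.IsHermitian) {t : ℝ} (ht : ∀ i, hA.eigenvalues i ≤ t) :
    (t • (1 : Matrix n n ℝ) - A).PosSemidef := by
  have hU : (hA.eigenvectorUnitary : Matrix n n ℝ) * star (hA.eigenvectorUnitary : Matrix n n ℝ) = 1 :=
    Matrix.mem_unitaryGroup_iff.mp (hA.eigenvectorUnitary).2
  have h1 : t • (1 : Matrix n n ℝ) - A
      = (hA.eigenvectorUnitary : Matrix n n ℝ) * Matrix.diagonal (fun i => t - hA.eigenvalues i) *
        star (hA.eigenvectorUnitary : Matrix n n ℝ) := by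
    have hd : Matrix.diagonal (fun i => t - hA.eigenvalues i)
        = t • (1 : Matrix n n ℝ) - Matrix.diagonal (RCLike.ofReal ∘ hA.eigenvalues) := by
      ext i j
      by_cases h : i = j <;>
        simp [Matrix.diagonal_apply, h, Matrix.one_apply, Matrix.sub_apply]
    rw [hd, Matrix.mul_sub, Matrix.sub_mul]
    conv_lhs => rw [hA.spectral_theorem, Unitary.conjStarAlgAut_apply]
    congr 1
    rw [mul_smul_comm, mul_one, smul_mul_assoc, hU]
  rw [h1, Matrix.star_eq_conjTranspose]
  exact (Matrix.PosSemidef.diagonal (fun i => by simp [ht i])).mul_mul_conjTranspose_same _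

lemma rayleigh_le {n : Type*} [Fintype n] [DecidableEq n] {A : Matrix n n ℝ}
    (hA : A.IsHermitian) {t : ℝ} (ht : ∀ i, hA.eigenvalues i ≤ t) (x : n → ℝ) :
    x ⬝ᵥ (A *ᵥ x) ≤ t * (x ⬝ᵥ x) := by
  have h := (psd_shift hA ht).dotProduct_mulVec_nonneg x
  simp only [star_trivial, sub_mulVec, smul_mulVec, one_mulVec, dotProduct_sub,
    dotProduct_smul, smul_eq_mul] at h
  linarith

lemma rayleigh_eq {n : Type*} [Fintype n] [DecidableEq n] {A : Matrix n n ℝ}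
    (hA : A.IsHermitian) {t : ℝ} (ht : ∀ i, hA.eigenvalues i ≤ t) (x : n → ℝ)
    (hx : x ⬝ᵥ (A *ᵥ x) = t * (x ⬝ᵥ x)) : A *ᵥ x = t • x := by
  have h0 : star x ⬝ᵥ ((t • (1 : Matrix n n ℝ) - A) *ᵥ x) = 0 := by
    simp only [star_trivial, sub_mulVec, smul_mulVec, one_mulVec, dotProduct_sub,
      dotProduct_smul, smul_eq_mul]
    linarith
  have h1 := ((psd_shift hA ht).dotProduct_mulVec_zero_iff x).mp h0
  have h2 : t • x - A *ᵥ x = 0 := by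
    rw [← h1]
    simp [sub_mulVec, smul_mulVec, one_mulVec]
  rw [sub_eq_zero] at h2
  exact h2.symm

lemma sortedEigs_ge {n : Type*} [Fintype n] [DecidableEq n] {A : Matrix n n ℝ}
    (hA : A.IsHermitian) (m : Fin (Fintype.card n))
    (hm : ∀ l : Fin (Fintype.card n), l ≤ m) (k : n) :
    hA.eigenvalues k ≤ sortedEigs A m := by
  rw [sortedEigs, dif_pos hA]
  set g : Fin (Fintype.card n) → ℝ := fun i => hA.eigenvalues ((Fintype.equivFin n).symm i)
    with hg
  have hmono := Tuple.monotone_sort g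
  have key : hA.eigenvalues k = (g ∘ ⇑(Tuple.sort g)) ((Tuple.sort g)⁻¹ (Fintype.equivFin n k)) := by
    simp [hg]
  rw [key]
  exact hmono (hm _)

set_option maxHeartbeats 1000000 in
/-- For a connected bipartite weighted graph with parts `V1` and `V1ᶜ`, any nonzero
eigenvector `v` of the Laplacian for the largest eigenvalue satisfies
`v i * v j > 0` when `i, j` are on the same side of the bipartition and
`v i * v j < 0` when they are on opposite sides; in particular `v` has no zero
component and `{i : v i ≥ 0}` equals `V1` or `V1ᶜ`. -/
theorem largest_laplacian_eigenvector_polarity_of_bipartite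
    {N : ℕ} (hN : 2 ≤ N) (W : Matrix (Fin N) (Fin N) ℝ)
    (hsymm : W.IsSymm) (hnonneg : ∀ i j, 0 ≤ W i j) (hdiag : ∀ i, W i i = 0)
    (hconn : IsConn W) (V1 : Set (Fin N)) (hbip : IsBipartiteWith W V1)
    (v : Fin N → ℝ) (hv : v ≠ 0)
    (heig : lap W *ᵥ v =
      sortedEigs (lap W) ⟨N - 1, by simp only [Fintype.card_fin]; omega⟩ • v) :
    (∀ i j, ((i ∈ V1 ∧ j ∈ V1) ∨ (i ∉ V1 ∧ j ∉ V1)) → 0 < v i * v j) ∧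
    (∀ i j, ((i ∈ V1 ∧ j ∉ V1) ∨ (i ∉ V1 ∧ j ∈ V1)) → v i * v j < 0) ∧
    (∀ i, v i ≠ 0) ∧
    ({i | 0 ≤ v i} = V1 ∨ {i | 0 ≤ v i} = V1ᶜ) := by
  classical
  have hL : (lap W).IsHermitian := lap_herm hsymm
  obtain ⟨lam, hlam, hlamge⟩ :
      ∃ lam : ℝ, (lap W *ᵥ v = lam • v) ∧ ∀ k, hL.eigenvalues k ≤ lam := by
    refine ⟨_, heig, ?_⟩
    intro k
    refine sortedEigs_ge hL _ (fun l => ?_) k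
    rw [Fin.le_def]
    have := l.2
    simp only [Fintype.card_fin] at this ⊢
    omega
  have hvLv : v ⬝ᵥ (lap W *ᵥ v) = lam * (v ⬝ᵥ v) := by
    rw [hlam, dotProduct_smul, smul_eq_mul]
  set s : Fin N → ℝ := fun i => if i ∈ V1 then 1 else -1 with hsdef
  have hs_sq : ∀ i, s i * s i = 1 := fun i => by
    by_cases h : i ∈ V1 <;> simp [hsdef, h]
  have hs_ne : ∀ i, s i ≠ 0 := fun i => by
    by_cases h : i ∈ V1 <;> simp [hsdef, h]
  have hs_edge : ∀ i j, 0 < W i j → s j = -s i := by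
    intro i j h
    have hb := hbip i j h
    by_cases hi : i ∈ V1
    · have hj : j ∉ V1 := hb.mp hi
      simp [hsdef, hi, hj]
    · have hj : j ∈ V1 := by
        by_contra hj
        exact hi (hb.mpr hj)
      simp [hsdef, hi, hj]
  set w : Fin N → ℝ := fun i => s i * |v i| with hwdef
  have hww : w ⬝ᵥ w = v ⬝ᵥ v := by
    refine Finset.sum_congr rfl fun i _ => ?_
    simp only [hwdef]
    calc (s i * |v i|) * (s i * |v i|) = (s i * s i) * (|v i| * |v i|) := by ring
      _ = v i * v i := by rw [hs_sq i, one_mul, abs_mul_abs_self]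
  have hwd : ∀ i j, 0 < W i j → (w i - w j)^2 = (|v i| + |v j|)^2 := by
    intro i j h
    have hsj := hs_edge i j h
    have h1 : w i - w j = s i * (|v i| + |v j|) := by
      simp only [hwdef]
      rw [hsj]; ring
    rw [h1, mul_pow, sq, hs_sq i, one_mul]
  have hterm : ∀ i j, W i j * (v i - v j)^2 ≤ W i j * (w i - w j)^2 := by
    intro i j
    rcases (hnonneg i j).eq_or_lt with h | h
    · rw [← h]; simp
    · rw [hwd i j h]
      refine mul_le_mul_of_nonneg_left ?_ (le_of_lt h)
      nlinarith [abs_nonneg (v i), abs_nonneg (v j), le_abs_self (v i), neg_abs_le (v i),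
        le_abs_self (v j), neg_abs_le (v j)]
  have hsum_le : ∑ i, ∑ j, W i j * (v i - v j)^2 ≤ ∑ i, ∑ j, W i j * (w i - w j)^2 :=
    Finset.sum_le_sum fun i _ => Finset.sum_le_sum fun j _ => hterm i j
  have hqv := quad_form hsymm v
  have hqw := quad_form hsymm w
  have hwLw_le : w ⬝ᵥ (lap W *ᵥ w) ≤ lam * (w ⬝ᵥ w) := rayleigh_le hL hlamge w
  have hlww : lam * (w ⬝ᵥ w) = lam * (v ⬝ᵥ v) := by rw [hww]
  have hwLw : w ⬝ᵥ (lap W *ᵥ w) = lam * (w ⬝ᵥ w) := by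
    linarith [hsum_le, hqv, hqw, hvLv, hwLw_le, hlww]
  have hSumEq : ∑ i, ∑ j, W i j * (v i - v j)^2 = ∑ i, ∑ j, W i j * (w i - w j)^2 := by
    linarith [hqv, hqw, hvLv, hwLw, hlww]
  have hweig : lap W *ᵥ w = lam • w := rayleigh_eq hL hlamge w hwLw
  have houter := (Finset.sum_eq_sum_iff_of_le
    (fun i _ => Finset.sum_le_sum fun j _ => hterm i j)).mp hSumEq
  have htermEq : ∀ i j, W i j * (v i - v j)^2 = W i j * (w i - w j)^2 := fun i j =>
    (Finset.sum_eq_sum_iff_of_le (fun j _ => hterm i j)).mp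
      (houter i (Finset.mem_univ i)) j (Finset.mem_univ j)
  have hedgemul : ∀ i j, 0 < W i j → v i * v j = -(|v i| * |v j|) := by
    intro i j h
    have he := htermEq i j
    rw [hwd i j h] at he
    have e1 : (v i - v j)^2 = (|v i| + |v j|)^2 := mul_left_cancel₀ (ne_of_gt h) he
    linear_combination (-(1:ℝ)/2) * e1 - (1/2) * sq_abs (v i) - (1/2) * sq_abs (v j)
  have hrowW : ∀ i, deg W i * w i - ∑ j, W i j * w j = lam * w i := by
    intro i
    have h1 := congrFun hweig i
    rw [lap_mulVec] at h1
    simpa using h1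
  have hprop : ∀ i j, |v i| = 0 → 0 < W i j → |v j| = 0 := by
    intro i j hi hij
    have hwi : w i = 0 := by simp only [hwdef]; rw [hi, mul_zero]
    have hsum0 : ∑ k, W i k * w k = 0 := by
      have h1 := hrowW i
      rw [hwi] at h1
      linarith
    have htrans : ∑ k, W i k * w k = (- s i) * ∑ k, W i k * |v k| := by
      rw [Finset.mul_sum]
      refine Finset.sum_congr rfl fun k _ => ?_
      rcases (hnonneg i k).eq_or_lt with h | h
      · rw [← h]; ring
      · simp only [hwdef]
        rw [hs_edge i k h]; ring
    have hsum0' : ∑ k, W i k * |v k| = 0 := by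
      rw [htrans] at hsum0
      rcases mul_eq_zero.mp hsum0 with h | h
      · exact absurd (neg_eq_zero.mp h) (hs_ne i)
      · exact h
    have h2 := (Finset.sum_eq_zero_iff_of_nonneg
      (fun k _ => mul_nonneg (hnonneg i k) (abs_nonneg _))).mp hsum0' j (Finset.mem_univ j)
    rcases mul_eq_zero.mp h2 with h | h
    · exact absurd h (ne_of_gt hij)
    · exact h
  have hvnz : ∀ i, v i ≠ 0 := by
    by_contra hc
    push_neg at hc
    obtain ⟨i, hi⟩ := hc
    apply hv
    funext j
    have hz : ∀ j, Relation.ReflTransGen (fun a b => 0 < W a b) i j → |v j| = 0 := by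
      intro j hpath
      induction hpath with
      | refl => rw [hi]; exact abs_zero
      | tail hp he ih => exact hprop _ _ ih he
    exact abs_eq_zero.mp (hz j (hconn i j))
  have hedgeneg : ∀ i j, 0 < W i j → v i * v j < 0 := by
    intro i j h
    rw [hedgemul i j h]
    have := mul_pos (abs_pos.mpr (hvnz i)) (abs_pos.mpr (hvnz j))
    linarith
  have hsign : ∀ i j, ((i ∈ V1 ↔ j ∈ V1) → 0 < v i * v j) ∧
      (¬(i ∈ V1 ↔ j ∈ V1) → v i * v j < 0) := by
    intro i j
    induction hconn i j with
    | refl => exact ⟨fun _ => mul_self_pos.mpr (hvnz i), fun h => absurd Iff.rfl h⟩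
    | @tail b c hp he ih =>
      have hbc : v b * v c < 0 := hedgeneg b c he
      have hflip : b ∈ V1 ↔ c ∉ V1 := hbip b c he
      have hb2 : 0 < v b * v b := mul_self_pos.mpr (hvnz b)
      constructor
      · intro hic
        have h1 := ih.2 (by tauto)
        nlinarith
      · intro hic
        have h1 := ih.1 (by tauto)
        nlinarith
  refine ⟨?_, ?_, hvnz, ?_⟩
  · intro i j hcase
    exact (hsign i j).1 (by tauto)
  · intro i j hcase
    exact (hsign i j).2 (by tauto)
  · set p : Fin N := ⟨0, by omega⟩
    rcases (hvnz p).lt_or_gt with hneg | hpos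
    · by_cases hp : p ∈ V1
      · right
        ext i
        simp only [Set.mem_setOf_eq, Set.mem_compl_iff]
        constructor
        · intro h0 hiV
          have := (hsign i p).1 (by tauto)
          nlinarith
        · intro hiV
          have := (hsign i p).2 (by tauto)
          nlinarith
      · left
        ext i
        simp only [Set.mem_setOf_eq]
        constructor
        · intro h0
          by_contra hiV
          have := (hsign i p).1 (by tauto)
          nlinarith
        · intro hiV
          have := (hsign i p).2 (by tauto)
          nlinarith
    · by_cases hp : p ∈ V1
      · left
        ext i
        simp only [Set.mem_setOf_eq]
        constructor
        · intro h0
          by_contra hiV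
          have := (hsign i p).2 (by tauto)
          nlinarith
        · intro hiV
          have := (hsign i p).1 (by tauto)
          nlinarith
      · right
        ext i
        simp only [Set.mem_setOf_eq, Set.mem_compl_iff]
        constructor
        · intro h0 hiV
          have := (hsign i p).2 (by tauto)
          nlinarith
        · intro hiV
          have := (hsign i p).1 (by tauto)
          nlinarith
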